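/- arXiv:1601.07780 — 2 statements merged into one kernel-verified Lean document; each statement's English description precedes it below -/
import Mathlib

section
/- The function A(h_U, h_Z) = c₁/(h_U h_Z) + c₂(a h_U⁴ + 2b h_U² h_Z² + d h_Z⁴) over h_U, h_Z > 0, with c₁, c₂, a, d > 0 and b > −√(ad), is minimized at h_U* = (c₁ d^{3/4} / (4 c₂ (√(ad) + b) a^{3/4}))^{1/6} and h_Z* = (a/d)^{1/4} h_U*, and in particular the minimizer satisfies h_Z*/h_U* = (a/d)^{1/4}. -/
private lemma aux_min (c₁ c₂ a b d s u z : ℝ) (hc₂ : 0 < c₂)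
    (ha : 0 < a) (hd : 0 < d) (hs : 0 < s)
    (hsad : Real.sqrt (a * d) = s - b)
    (hu : 0 < u) (hz : 0 < z)
    (key1 : Real.sqrt d * z ^ 2 = Real.sqrt a * u ^ 2)
    (key2 : c₁ = 4 * c₂ * s * (u * z) ^ 3) :
    ∀ x y : ℝ, 0 < x → 0 < y →
      c₁ / (u * z) + c₂ * (a * u ^ 4 + 2 * b * u ^ 2 * z ^ 2 + d * z ^ 4) ≤
      c₁ / (x * y) + c₂ * (a * x ^ 4 + 2 * b * x ^ 2 * y ^ 2 + d * y ^ 4) := by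
  intro x y hx hy
  have hTpos : 0 < u * z := mul_pos hu hz
  have htpos : 0 < x * y := mul_pos hx hy
  have hra : Real.sqrt a ^ 2 = a := Real.sq_sqrt ha.le
  have hrd : Real.sqrt d ^ 2 = d := Real.sq_sqrt hd.le
  have hrad : Real.sqrt a * Real.sqrt d = s - b := by
    rw [← Real.sqrt_mul ha.le, hsad]
  have e1 : a * u ^ 4 + 2 * b * u ^ 2 * z ^ 2 + d * z ^ 4 = 2 * s * (u * z) ^ 2 := by
    linear_combination -(u ^ 4) * hra - z ^ 4 * hrd +
      (Real.sqrt d * z ^ 2 - Real.sqrt a * u ^ 2) * key1 + 2 * u ^ 2 * z ^ 2 * hrad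
  have e3 : a * x ^ 4 + 2 * b * x ^ 2 * y ^ 2 + d * y ^ 4 =
      (Real.sqrt a * x ^ 2 - Real.sqrt d * y ^ 2) ^ 2 + 2 * s * (x * y) ^ 2 := by
    linear_combination -(x ^ 4) * hra - y ^ 4 * hrd + 2 * x ^ 2 * y ^ 2 * hrad
  have hc1T : c₁ / (u * z) = 4 * c₂ * s * (u * z) ^ 2 := by
    rw [key2]; field_simp
  have hmain : 6 * c₂ * s * (u * z) ^ 2 ≤ c₁ / (x * y) + 2 * c₂ * s * (x * y) ^ 2 := by
    have h : c₁ / (x * y) + 2 * c₂ * s * (x * y) ^ 2 - 6 * c₂ * s * (u * z) ^ 2 =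
        (2 * c₂ * s / (x * y)) * ((x * y - u * z) ^ 2 * (x * y + 2 * (u * z))) := by
      rw [key2]; field_simp; ring
    have hnn : 0 ≤ (2 * c₂ * s / (x * y)) * ((x * y - u * z) ^ 2 * (x * y + 2 * (u * z))) := by
      positivity
    linarith
  have hsq : 0 ≤ c₂ * (Real.sqrt a * x ^ 2 - Real.sqrt d * y ^ 2) ^ 2 := by positivity
  rw [e1, e3, hc1T]
  nlinarith [hmain, hsq]

/-- The AMISE criterion A(h_U,h_Z) = c₁/(h_U h_Z) + c₂(a h_U⁴ + 2b h_U² h_Z² + d h_Z⁴)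
over h_U, h_Z > 0 (c₁, c₂, a, d > 0, b > −√(ad)) is minimized at
h_U* = (c₁ d^{3/4}/(4 c₂ (√(ad)+b) a^{3/4}))^{1/6} and h_Z* = (a/d)^{1/4} h_U*,
and the minimizer satisfies h_Z*/h_U* = (a/d)^{1/4}. -/
theorem stmt3 (c₁ c₂ a b d : ℝ) (hc₁ : 0 < c₁) (hc₂ : 0 < c₂) (ha : 0 < a) (hd : 0 < d)
    (hb : -Real.sqrt (a * d) < b) :
    let A : ℝ → ℝ → ℝ := fun hU hZ =>
      c₁ / (hU * hZ) + c₂ * (a * hU ^ 4 + 2 * b * hU ^ 2 * hZ ^ 2 + d * hZ ^ 4)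
    let hUstar : ℝ :=
      (c₁ * d ^ ((3 : ℝ) / 4) / (4 * c₂ * (Real.sqrt (a * d) + b) * a ^ ((3 : ℝ) / 4)))
        ^ ((1 : ℝ) / 6)
    let hZstar : ℝ := (a / d) ^ ((1 : ℝ) / 4) * hUstar
    (∀ hU hZ : ℝ, 0 < hU → 0 < hZ → A hUstar hZstar ≤ A hU hZ) ∧
      hZstar / hUstar = (a / d) ^ ((1 : ℝ) / 4) := by
  intro A hUstar hZstar
  have hs : 0 < Real.sqrt (a * d) + b := by linarith
  have had : (0 : ℝ) < a / d := by positivity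
  have hP : 0 < c₁ * d ^ ((3 : ℝ) / 4) /
      (4 * c₂ * (Real.sqrt (a * d) + b) * a ^ ((3 : ℝ) / 4)) := by positivity
  have hUdef : hUstar = (c₁ * d ^ ((3 : ℝ) / 4) /
      (4 * c₂ * (Real.sqrt (a * d) + b) * a ^ ((3 : ℝ) / 4))) ^ ((1 : ℝ) / 6) := rfl
  have hZdef : hZstar = (a / d) ^ ((1 : ℝ) / 4) * hUstar := rfl
  have hu : 0 < hUstar := by rw [hUdef]; exact Real.rpow_pos_of_pos hP _
  have hqpos : 0 < (a / d) ^ ((1 : ℝ) / 4) := Real.rpow_pos_of_pos had _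
  have hz : 0 < hZstar := by rw [hZdef]; exact mul_pos hqpos hu
  have hu6 : hUstar ^ 6 = c₁ * d ^ ((3 : ℝ) / 4) /
      (4 * c₂ * (Real.sqrt (a * d) + b) * a ^ ((3 : ℝ) / 4)) := by
    rw [hUdef, ← Real.rpow_natCast (_ ^ ((1 : ℝ) / 6)) 6, ← Real.rpow_mul hP.le]
    norm_num
  have hq3 : ((a / d) ^ ((1 : ℝ) / 4)) ^ 3 = (a / d) ^ ((3 : ℝ) / 4) := by
    rw [← Real.rpow_natCast ((a / d) ^ ((1 : ℝ) / 4)) 3, ← Real.rpow_mul had.le]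
    norm_num
  have hq2 : ((a / d) ^ ((1 : ℝ) / 4)) ^ 2 = Real.sqrt (a / d) := by
    rw [← Real.rpow_natCast ((a / d) ^ ((1 : ℝ) / 4)) 2, ← Real.rpow_mul had.le,
      Real.sqrt_eq_rpow]
    norm_num
  have hdiv : (a / d) ^ ((3 : ℝ) / 4) = a ^ ((3 : ℝ) / 4) / d ^ ((3 : ℝ) / 4) :=
    Real.div_rpow ha.le hd.le _
  have key1 : Real.sqrt d * hZstar ^ 2 = Real.sqrt a * hUstar ^ 2 := by
    rw [hZdef, mul_pow, hq2, ← mul_assoc, ← Real.sqrt_mul hd.le,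
      show d * (a / d) = a by field_simp]
  have hT3 : (hUstar * hZstar) ^ 3 = (a / d) ^ ((3 : ℝ) / 4) * hUstar ^ 6 := by
    rw [hZdef, show hUstar * ((a / d) ^ ((1 : ℝ) / 4) * hUstar) =
      (a / d) ^ ((1 : ℝ) / 4) * hUstar ^ 2 by ring, mul_pow, hq3, ← pow_mul]
  have ha34 : (0 : ℝ) < a ^ ((3 : ℝ) / 4) := Real.rpow_pos_of_pos ha _
  have hd34 : (0 : ℝ) < d ^ ((3 : ℝ) / 4) := Real.rpow_pos_of_pos hd _
  have key2 : c₁ = 4 * c₂ * (Real.sqrt (a * d) + b) * (hUstar * hZstar) ^ 3 := by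
    rw [hT3, hu6, hdiv]
    have hsne : Real.sqrt (a * d) + b ≠ 0 := hs.ne'
    generalize hS : Real.sqrt (a * d) + b = S at hsne ⊢
    field_simp
  constructor
  · intro x y hx hy
    exact aux_min c₁ c₂ a b d (Real.sqrt (a * d) + b) hUstar hZstar hc₂ ha hd hs
      (by ring) hu hz key1 key2 x y hx hy
  · rw [hZdef, mul_div_assoc, div_self hu.ne', mul_one]
end

section
/- With sparse-optimal bandwidths h_U ≍ h_Z ≍ (nm)^{−1/6} and m ≍ n^θ, the relation n^{−1} h_Z^{−1} = o((nm)^{−1} h_U^{−1} h_Z^{−1}) (i.e. the functional-specific variance term V^{II} is of smaller order than V^{I}) holds if and only if 0 ≤ θ < 1/5. -/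
open Filter Topology

private lemma stmt7_key (θ mm hUv N : ℝ) (hm : 0 < mm) (hN : 1 ≤ N) :
    mm * hUv
      = (mm / N^θ)^((5:ℝ)/6) * (hUv / (N*mm)^(-(1:ℝ)/6)) * N^((5*θ-1)/6) := by
  have hN0 : (0:ℝ) < N := lt_of_lt_of_le one_pos hN
  have hNm : (0:ℝ) < N * mm := mul_pos hN0 hm
  have hNθ : (0:ℝ) < N ^ θ := Real.rpow_pos_of_pos hN0 _
  rw [show (-(1:ℝ)/6) = -(1/6) by ring, Real.rpow_neg hNm.le, div_inv_eq_mul]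
  rw [Real.div_rpow hm.le hNθ.le, Real.mul_rpow hN0.le hm.le, ← Real.rpow_mul hN0.le]
  rw [div_mul_eq_mul_div, div_mul_eq_mul_div,
    eq_div_iff (Real.rpow_pos_of_pos hN0 _).ne']
  have e1 : mm ^ ((5:ℝ)/6) * (hUv * (N ^ ((1:ℝ)/6) * mm ^ ((1:ℝ)/6))) * N ^ ((5*θ-1)/6)
      = (mm ^ ((5:ℝ)/6) * mm ^ ((1:ℝ)/6)) * hUv * (N ^ ((1:ℝ)/6) * N ^ ((5*θ-1)/6)) := by ring
  rw [e1, ← Real.rpow_add hm, ← Real.rpow_add hN0]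
  norm_num
  exact Or.inl (by rw [show ((1:ℝ)/6 + (5*θ-1)/6) = θ * (5/6) by ring])

/-- With sparse-optimal bandwidths h_U ≍ h_Z ≍ (nm)^{−1/6} and m ≍ n^θ (θ ≥ 0),
the relation n⁻¹h_Z⁻¹ = o((nm)⁻¹h_U⁻¹h_Z⁻¹) holds if and only if θ < 1/5. -/
theorem stmt7 (θ : ℝ) (hθ : 0 ≤ θ)
    (m hU hZ : ℕ → ℝ) (hmpos : ∀ n, 0 < m n)
    (hUpos : ∀ n, 0 < hU n) (hZpos : ∀ n, 0 < hZ n)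
    (hm : ∃ L : ℝ, 0 < L ∧ Tendsto (fun n => m n / (n : ℝ) ^ θ) atTop (𝓝 L))
    (hhU : ∃ L : ℝ, 0 < L ∧
      Tendsto (fun n => hU n / ((n : ℝ) * m n) ^ (-(1 : ℝ) / 6)) atTop (𝓝 L))
    (hhZ : ∃ L : ℝ, 0 < L ∧
      Tendsto (fun n => hZ n / ((n : ℝ) * m n) ^ (-(1 : ℝ) / 6)) atTop (𝓝 L)) :
    Tendsto (fun (n : ℕ) => ((n : ℝ)⁻¹ * (hZ n)⁻¹) / (((n : ℝ) * m n)⁻¹ * (hU n)⁻¹ * (hZ n)⁻¹))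
        atTop (𝓝 0) ↔ θ < 1 / 5 := by
  obtain ⟨L1, hL1, hmlim⟩ := hm
  obtain ⟨L2, hL2, hUlim⟩ := hhU
  set a : ℕ → ℝ := fun n => (m n / (n:ℝ)^θ) ^ ((5:ℝ)/6) with ha
  set b : ℕ → ℝ := fun n => hU n / ((n:ℝ) * m n) ^ (-(1:ℝ)/6) with hb
  have hA : Tendsto a atTop (𝓝 (L1 ^ ((5:ℝ)/6))) := by
    have : ContinuousAt (fun x : ℝ => x ^ ((5:ℝ)/6)) L1 :=
      Real.continuousAt_rpow_const _ _ (Or.inl hL1.ne')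
    exact this.tendsto.comp hmlim
  have hAB : Tendsto (fun n => a n * b n) atTop (𝓝 (L1 ^ ((5:ℝ)/6) * L2)) := hA.mul hUlim
  have hABpos : 0 < L1 ^ ((5:ℝ)/6) * L2 := mul_pos (Real.rpow_pos_of_pos hL1 _) hL2
  -- positivity of a and b for n ≥ 1
  have habpos : ∀ n : ℕ, 1 ≤ n → 0 < a n * b n := by
    intro n hn
    have hN0 : (0:ℝ) < (n:ℝ) := by exact_mod_cast hn
    have hNm : (0:ℝ) < (n:ℝ) * m n := mul_pos hN0 (hmpos n)
    exact mul_pos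
      (Real.rpow_pos_of_pos (div_pos (hmpos n) (Real.rpow_pos_of_pos hN0 _)) _)
      (div_pos (hUpos n) (Real.rpow_pos_of_pos hNm _))
  -- eventual rewriting of the ratio
  have key : ∀ᶠ n : ℕ in atTop,
      ((n : ℝ)⁻¹ * (hZ n)⁻¹) / (((n : ℝ) * m n)⁻¹ * (hU n)⁻¹ * (hZ n)⁻¹)
        = a n * b n * (n:ℝ) ^ ((5*θ-1)/6) := by
    filter_upwards [eventually_ge_atTop 1] with n hn
    have hN1 : (1:ℝ) ≤ (n:ℝ) := by exact_mod_cast hn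
    have hN0 : (0:ℝ) < (n:ℝ) := lt_of_lt_of_le one_pos hN1
    have h1 : ((n : ℝ)⁻¹ * (hZ n)⁻¹) / (((n : ℝ) * m n)⁻¹ * (hU n)⁻¹ * (hZ n)⁻¹)
        = m n * hU n := by
      have h2 : (n:ℝ) ≠ 0 := hN0.ne'
      have h3 : hZ n ≠ 0 := (hZpos n).ne'
      have h4 : hU n ≠ 0 := (hUpos n).ne'
      have h5 : m n ≠ 0 := (hmpos n).ne'
      field_simp
    rw [h1, stmt7_key θ (m n) (hU n) (n:ℝ) (hmpos n) hN1]
  constructor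
  · intro h
    by_contra hge
    push_neg at hge
    have hc : (0:ℝ) ≤ (5*θ-1)/6 := by linarith
    -- then N^c = ratio / (a*b) tends to 0
    have h0 : Tendsto (fun n : ℕ => ((n:ℝ) ^ ((5*θ-1)/6))) atTop (𝓝 0) := by
      have := (h.div hAB hABpos.ne')
      rw [zero_div] at this
      refine this.congr' ?_
      filter_upwards [key, eventually_ge_atTop 1] with n heq hn
      simp only [Pi.div_apply]
      rw [heq]
      exact mul_div_cancel_left₀ _ (habpos n hn).ne'
    have h1 : ∀ᶠ n : ℕ in atTop, (1:ℝ) ≤ (n:ℝ) ^ ((5*θ-1)/6) := by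
      filter_upwards [eventually_ge_atTop 1] with n hn
      exact Real.one_le_rpow (by exact_mod_cast hn) hc
    have := (h0.eventually (eventually_lt_nhds (show (0:ℝ) < 1 by norm_num))).and h1
    obtain ⟨n, hn1, hn2⟩ := this.exists
    linarith
  · intro hlt
    have hc : (0:ℝ) < -((5*θ-1)/6) := by linarith
    have hNc : Tendsto (fun n : ℕ => (n:ℝ) ^ ((5*θ-1)/6)) atTop (𝓝 0) := by
      have := (tendsto_rpow_neg_atTop hc).comp (tendsto_natCast_atTop_atTop (R := ℝ))
      simpa [Function.comp_def] using this
    have : Tendsto (fun n : ℕ => a n * b n * (n:ℝ) ^ ((5*θ-1)/6)) atTop (𝓝 0) := by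
      simpa using hAB.mul hNc
    exact Tendsto.congr' (key.mono fun n h => h.symm) this
end
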